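/- Let M be a matroid, ψ: E(M) → Γ a group labeling, F ⊆ Γ a finite set, and B a basis such that |B \ B̄| ≥ |F| + 1 for every F-avoiding basis B̄ of M. Let X ⊆ B, let M' = M / X be the matroid obtained by contracting X, let B' = B \ X, and let F' = {f - ψ(X) : f ∈ F}. Then |B' \ B̄'| ≥ |F| + 1 for every F'-avoiding basis B̄' of M'. -/

import Mathlib

/-- If `B` is a basis with `|B \ Bbar| ≥ |F| + 1` for every `F`-avoiding basis
`Bbar`, and `M' = M / X` is obtained by contracting `X ⊆ B` (so the bases of `M'` are the
sets `Bbar'` disjoint from `X` with `Bbar' ∪ X` a basis of `M`), then `|B' \ Bbar'| ≥ |F| + 1`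
for every `F'`-avoiding basis `Bbar'` of `M'`, where `B' = B \ X` and
`F' = {f - ψ(X) : f ∈ F}`. -/
theorem stmt_8 {α Γ : Type*} [AddCommGroup Γ] [DecidableEq Γ] (M : Matroid α) [M.Finite]
    (ψ : α → Γ) (F : Finset Γ) (B : Set α) (hB : M.IsBase B)
    (hfar : ∀ Bbar, M.IsBase Bbar → (∑ᶠ e ∈ Bbar, ψ e) ∉ F → F.card + 1 ≤ (B \ Bbar).ncard)
    (X : Set α) (hX : X ⊆ B) :
    ∀ Bbar' : Set α, Disjoint Bbar' X → M.IsBase (Bbar' ∪ X) →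
      (∑ᶠ e ∈ Bbar', ψ e) ∉ F.image (fun f => f - ∑ᶠ e ∈ X, ψ e) →
      F.card + 1 ≤ ((B \ X) \ Bbar').ncard := by
  intro Bbar' hdisj hbase havoid
  have hsum : (∑ᶠ e ∈ Bbar' ∪ X, ψ e) = (∑ᶠ e ∈ Bbar', ψ e) + (∑ᶠ e ∈ X, ψ e) := by
    apply finsum_mem_union hdisj
    · exact (M.ground_finite.subset hbase.subset_ground).subset Set.subset_union_left
    · exact (M.ground_finite.subset hbase.subset_ground).subset Set.subset_union_right
  have hnot : (∑ᶠ e ∈ Bbar' ∪ X, ψ e) ∉ F := by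
    intro hmem
    apply havoid
    refine Finset.mem_image.2 ⟨_, hmem, ?_⟩
    rw [hsum]
    abel
  have := hfar _ hbase hnot
  have hset : B \ (Bbar' ∪ X) = (B \ X) \ Bbar' := by
    ext x; simp [and_comm]; tauto
  rwa [hset] at this
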